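/- Let m ≥ 1 and n', n'' ≥ 0 be integers, let M = ℤ4^{2m} × ℤ2^{2n'} × ℤ4^{n''}, and let C ⊆ M be an additive 1-perfect code with respect to the Doob D(m, n'+n'')-metric. Then the map e ↦ e + C is a bijection from the set consisting of the zero vertex together with all vertices of weight 1 (vertices at Doob distance exactly 1 from the zero vertex) onto the quotient group M/C; moreover, if e is a weight-1 vertex whose additive order in M is 4, then the coset e + C has order 4 in M/C. -/

import Mathlib

open SimpleGraph

/-- The box (Cartesian) product of an indexed family of simple graphs. -/
def boxPi {ι : Type*} {V : ι → Type*} (G : ∀ i, SimpleGraph (V i)) :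
    SimpleGraph (∀ i, V i) where
  Adj x y := ∃ i, (G i).Adj (x i) (y i) ∧ ∀ j, j ≠ i → x j = y j
  symm := by
    constructor
    rintro x y ⟨i, h, he⟩
    exact ⟨i, (G i).symm.symm _ _ h, fun j hj => (he j hj).symm⟩
  loopless := by
    constructor
    rintro x ⟨i, h, -⟩
    exact (G i).loopless.irrefl _ h

/-- The Shrikhande graph on `(ZMod 4) × (ZMod 4)`. -/
def Shri : SimpleGraph (ZMod 4 × ZMod 4) where
  Adj a b := a - b ∈
    ({(0, 1), (1, 0), (1, 1), (0, 3), (3, 0), (3, 3)} : Finset (ZMod 4 × ZMod 4))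
  symm := by
    have h : ∀ a b : ZMod 4 × ZMod 4,
        a - b ∈ ({(0, 1), (1, 0), (1, 1), (0, 3), (3, 0), (3, 3)} :
          Finset (ZMod 4 × ZMod 4)) →
        b - a ∈ ({(0, 1), (1, 0), (1, 1), (0, 3), (3, 0), (3, 3)} :
          Finset (ZMod 4 × ZMod 4)) := by decide
    constructor
    exact fun a b hab => h a b hab
  loopless := by
    constructor
    intro a h
    rw [sub_self] at h
    revert h
    decide

/-- `C` is a 1-perfect code in `G`: every vertex is at graph distance at most 1
(i.e., equal or adjacent) from exactly one element of `C`. -/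
def IsPerfectCode {V : Type*} (G : SimpleGraph V) (C : Set V) : Prop :=
  ∀ v : V, ∃! c : V, c ∈ C ∧ (v = c ∨ G.Adj v c)

/-- The vertex set `ℤ₄^{2m} × ℤ₂^{2n'} × ℤ₄^{n''}`, the consecutive pairs of
`ZMod 4`- (resp. `ZMod 2`-) coordinates being grouped together. -/
abbrev DoobVtx (m n' n'' : ℕ) : Type :=
  (Fin m → ZMod 4 × ZMod 4) × (Fin n' → ZMod 2 × ZMod 2) × (Fin n'' → ZMod 4)

/-- The Doob graph `D(m, n' + n'')` on `ℤ₄^{2m} × ℤ₂^{2n'} × ℤ₄^{n''}`. -/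
def DoobGraphZ (m n' n'' : ℕ) : SimpleGraph (DoobVtx m n' n'') :=
  (boxPi fun _ : Fin m => Shri) □
    ((boxPi fun _ : Fin n' => (⊤ : SimpleGraph (ZMod 2 × ZMod 2))) □
      (boxPi fun _ : Fin n'' => (⊤ : SimpleGraph (ZMod 4))))

open SimpleGraph

lemma shri_shift (a b t : ZMod 4 × ZMod 4) : Shri.Adj (a + t) (b + t) ↔ Shri.Adj a b := by
  show (a + t) - (b + t) ∈ _ ↔ a - b ∈ _
  rw [add_sub_add_right_eq_sub]

lemma top_shift {α : Type*} [AddGroup α] (a b t : α) :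
    (⊤ : SimpleGraph α).Adj (a + t) (b + t) ↔ (⊤ : SimpleGraph α).Adj a b := by
  simp

lemma boxPi_shift {ι : Type*} {V : ι → Type*} [∀ i, AddGroup (V i)]
    (G : ∀ i, SimpleGraph (V i))
    (h : ∀ i (a b t : V i), (G i).Adj (a + t) (b + t) ↔ (G i).Adj a b)
    (x y t : ∀ i, V i) : (boxPi G).Adj (x + t) (y + t) ↔ (boxPi G).Adj x y := by
  constructor
  · rintro ⟨i, hadj, he⟩
    refine ⟨i, (h i _ _ _).mp hadj, fun j hj => ?_⟩
    have := he j hj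
    simpa using add_right_cancel this
  · rintro ⟨i, hadj, he⟩
    refine ⟨i, (h i _ _ _).mpr hadj, fun j hj => ?_⟩
    show x j + t j = y j + t j
    rw [he j hj]

lemma doob_shift (m n' n'' : ℕ) (a b t : DoobVtx m n' n'') :
    (DoobGraphZ m n' n'').Adj (a + t) (b + t) ↔ (DoobGraphZ m n' n'').Adj a b := by
  simp only [DoobGraphZ, boxProd_adj]
  have h1 := boxPi_shift (fun _ : Fin m => Shri) (fun _ => shri_shift) a.1 b.1 t.1
  have h2 := boxPi_shift (fun _ : Fin n' => (⊤ : SimpleGraph (ZMod 2 × ZMod 2)))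
    (fun _ => top_shift) a.2.1 b.2.1 t.2.1
  have h3 := boxPi_shift (fun _ : Fin n'' => (⊤ : SimpleGraph (ZMod 4)))
    (fun _ => top_shift) a.2.2 b.2.2 t.2.2
  have e1 : (a.1 + t.1 = b.1 + t.1) ↔ a.1 = b.1 := add_left_injective t.1 |>.eq_iff
  have e21 : (a.2.1 + t.2.1 = b.2.1 + t.2.1) ↔ a.2.1 = b.2.1 := add_left_injective _ |>.eq_iff
  have e22 : (a.2.2 + t.2.2 = b.2.2 + t.2.2) ↔ a.2.2 = b.2.2 := add_left_injective _ |>.eq_iff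
  have e2 : (a.2 + t.2 = b.2 + t.2) ↔ a.2 = b.2 := add_left_injective t.2 |>.eq_iff
  show ((boxPi _).Adj (a.1 + t.1) (b.1 + t.1) ∧ a.2 + t.2 = b.2 + t.2) ∨
    (((boxPi _).Adj (a.2.1 + t.2.1) (b.2.1 + t.2.1) ∧ a.2.2 + t.2.2 = b.2.2 + t.2.2) ∨
      ((boxPi _).Adj (a.2.2 + t.2.2) (b.2.2 + t.2.2) ∧ a.2.1 + t.2.1 = b.2.1 + t.2.1)) ∧
      a.1 + t.1 = b.1 + t.1 ↔ _
  rw [h1, h2, h3, e1, e21, e22, e2]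

lemma doob_shift' (m n' n'' : ℕ) (a b : DoobVtx m n' n'') :
    (DoobGraphZ m n' n'').Adj a b ↔ (DoobGraphZ m n' n'').Adj 0 (b - a) := by
  have := doob_shift m n' n'' 0 (b - a) a
  simp only [zero_add, sub_add_cancel] at this
  exact this

theorem coset_map_bijective_on_ball (m n' n'' : ℕ) (hm : 1 ≤ m)
    (C : AddSubgroup (DoobVtx m n' n''))
    (hC : IsPerfectCode (DoobGraphZ m n' n'') (C : Set (DoobVtx m n' n''))) :
    Function.Bijective
      (fun e : {e : DoobVtx m n' n'' // e = 0 ∨ (DoobGraphZ m n' n'').Adj 0 e} =>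
        (QuotientAddGroup.mk e.val : DoobVtx m n' n'' ⧸ C)) ∧
    ∀ e : DoobVtx m n' n'', (DoobGraphZ m n' n'').Adj 0 e → addOrderOf e = 4 →
      addOrderOf (QuotientAddGroup.mk e : DoobVtx m n' n'' ⧸ C) = 4 := by
  -- a vertex in the ball around 0 is covered by the codeword (x - e) whenever x - e ∈ C
  have key : ∀ (x c : DoobVtx m n' n''), c ∈ C →
      ((x - c) = 0 ∨ (DoobGraphZ m n' n'').Adj 0 (x - c)) →
      (c ∈ (C : Set (DoobVtx m n' n'')) ∧ (x = c ∨ (DoobGraphZ m n' n'').Adj x c)) := by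
    intro x c hc hball
    refine ⟨hc, ?_⟩
    rcases hball with h0 | hadj
    · exact Or.inl (sub_eq_zero.mp h0)
    · right
      rw [doob_shift' m n' n'' x c]
      have : c - x = -(x - c) := by ring
      rw [this]
      -- Adj 0 (-(x-c)) from Adj 0 (x-c): shift by -(x-c)
      have := (doob_shift m n' n'' 0 (x - c) (-(x - c))).mpr hadj
      simp only [zero_add, add_neg_cancel] at this
      exact this.symm
  constructor
  · constructor
    · -- injective
      rintro ⟨e₁, he₁⟩ ⟨e₂, he₂⟩ h
      simp only [QuotientAddGroup.eq] at h
      -- h : -e₁ + e₂ ∈ C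
      obtain ⟨c, _, huniq⟩ := hC e₁
      have h1 : (0 : DoobVtx m n' n'') ∈ (C : Set _) ∧
          (e₁ = 0 ∨ (DoobGraphZ m n' n'').Adj e₁ 0) := by
        refine key e₁ 0 C.zero_mem ?_
        simpa using he₁
      have hmem : e₁ - e₂ ∈ C := by
        have := C.neg_mem h
        simpa [neg_add_rev, sub_eq_add_neg, add_comm] using this
      have h2 : (e₁ - e₂) ∈ (C : Set _) ∧
          (e₁ = e₁ - e₂ ∨ (DoobGraphZ m n' n'').Adj e₁ (e₁ - e₂)) := by
        refine key e₁ (e₁ - e₂) hmem ?_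
        have : e₁ - (e₁ - e₂) = e₂ := by ring
        rw [this]
        exact he₂
      have e1 := huniq 0 h1
      have e2 := huniq (e₁ - e₂) h2
      have : e₁ - e₂ = 0 := by rw [e2, ← e1]
      exact Subtype.ext (sub_eq_zero.mp this)
    · -- surjective
      intro q
      induction q using QuotientAddGroup.induction_on with
      | H v =>
        obtain ⟨c, ⟨hcC, hcv⟩, _⟩ := hC v
        have hball : (v - c) = 0 ∨ (DoobGraphZ m n' n'').Adj 0 (v - c) := by
          rcases hcv with h | h
          · exact Or.inl (by rw [h, sub_self])
          · exact Or.inr ((doob_shift' m n' n'' c v).mp h.symm)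
        refine ⟨⟨v - c, hball⟩, ?_⟩
        simp only [QuotientAddGroup.eq]
        have : -(v - c) + v = c := by ring
        rw [this]; exact hcC
  · intro e hadj hord
    have h2mem : ¬ (2 • e ∈ C) := by
      intro hmem
      obtain ⟨c, _, huniq⟩ := hC e
      have h1 : (0 : DoobVtx m n' n'') ∈ (C : Set _) ∧
          (e = 0 ∨ (DoobGraphZ m n' n'').Adj e 0) :=
        key e 0 C.zero_mem (by simpa using Or.inr hadj)
      have h2 : (2 • e) ∈ (C : Set _) ∧
          (e = 2 • e ∨ (DoobGraphZ m n' n'').Adj e (2 • e)) := by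
        refine key e (2 • e) hmem ?_
        right
        have : e - 2 • e = -e := by module
        rw [this]
        have := (doob_shift m n' n'' 0 e (-e)).mpr hadj
        simp only [zero_add, add_neg_cancel] at this
        exact this.symm
      have e1 := huniq 0 h1
      have e2 := huniq (2 • e) h2
      have h20 : 2 • e = 0 := by rw [e2, ← e1]
      have : addOrderOf e ∣ 2 := addOrderOf_dvd_of_nsmul_eq_zero h20
      rw [hord] at this
      omega
    have hq4 : 4 • (QuotientAddGroup.mk e : DoobVtx m n' n'' ⧸ C) = 0 := by
      have hdvd4 : addOrderOf e ∣ 4 := by rw [hord]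
      have : (4 : ℕ) • e = 0 := addOrderOf_dvd_iff_nsmul_eq_zero.mp hdvd4
      calc (4:ℕ) • (QuotientAddGroup.mk e : DoobVtx m n' n'' ⧸ C)
          = QuotientAddGroup.mk ((4:ℕ) • e) := by
            exact (map_nsmul (QuotientAddGroup.mk' C) 4 e).symm
        _ = 0 := by rw [this]; rfl
    have hq2 : ¬ ((2:ℕ) • (QuotientAddGroup.mk e : DoobVtx m n' n'' ⧸ C) = 0) := by
      intro h
      apply h2mem
      have : ((QuotientAddGroup.mk' C) ((2:ℕ) • e)) = 0 := by
        rw [map_nsmul (QuotientAddGroup.mk' C) 2 e]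
        exact h
      rwa [← QuotientAddGroup.eq_zero_iff]
    have hdvd : addOrderOf (QuotientAddGroup.mk e : DoobVtx m n' n'' ⧸ C) ∣ 4 :=
      addOrderOf_dvd_of_nsmul_eq_zero hq4
    have hnd : ¬ addOrderOf (QuotientAddGroup.mk e : DoobVtx m n' n'' ⧸ C) ∣ 2 := by
      intro h
      exact hq2 (addOrderOf_dvd_iff_nsmul_eq_zero.mp h)
    have h0 : addOrderOf (QuotientAddGroup.mk e : DoobVtx m n' n'' ⧸ C) ≠ 0 := by
      intro h; rw [h] at hdvd; norm_num at hdvd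
    have hle : addOrderOf (QuotientAddGroup.mk e : DoobVtx m n' n'' ⧸ C) ≤ 4 :=
      Nat.le_of_dvd (by norm_num) hdvd
    have h3 : addOrderOf (QuotientAddGroup.mk e : DoobVtx m n' n'' ⧸ C) ≠ 3 := by
      intro h; rw [h] at hdvd; norm_num at hdvd
    have h1 : addOrderOf (QuotientAddGroup.mk e : DoobVtx m n' n'' ⧸ C) ≠ 1 := by
      intro h; exact hnd (by rw [h]; norm_num)
    have h2 : addOrderOf (QuotientAddGroup.mk e : DoobVtx m n' n'' ⧸ C) ≠ 2 := by
      intro h; exact hnd (by rw [h])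
    omega
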